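/- For every n ≥ 2, Alice has a winning strategy with n colours in the colouring game on K_2 □ K_n with Bob moving first; hence χ_{g_B}(H_{2,n}) = n. -/

import Mathlib

variable {V : Type*} [Fintype V] [DecidableEq V]

/-- A partial colouring with palette `Fin k` is proper if adjacent vertices never
receive the same colour. -/
def ProperPartial {k : ℕ} (G : SimpleGraph V) (c : V → Option (Fin k)) : Prop :=
  ∀ v w, G.Adj v w → ∀ x, c v = some x → c w ≠ some x

/-- The number of uncoloured vertices. -/
def uncoloured {k : ℕ} (c : V → Option (Fin k)) : ℕ :=
  (Finset.univ.filter fun v => c v = none).card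

/-- A single move: properly colour one previously uncoloured vertex. -/
def GMove {k : ℕ} (G : SimpleGraph V) (c c' : V → Option (Fin k)) : Prop :=
  ∃ v x, c v = none ∧ c' = Function.update c v (some x) ∧ ProperPartial G c'

/-- A sequence of exactly `t` single moves. -/
def GMoveSeq {k : ℕ} (G : SimpleGraph V) :
    ℕ → (V → Option (Fin k)) → (V → Option (Fin k)) → Prop
  | 0, c, c' => c' = c
  | t + 1, c, c' => ∃ c'', GMove G c c'' ∧ GMoveSeq G t c'' c'

/-- A turn of a player who must colour `min t u` vertices, where `u` is the current
number of uncoloured vertices. -/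
def GTurn {k : ℕ} (G : SimpleGraph V) (t : ℕ) (c c' : V → Option (Fin k)) : Prop :=
  GMoveSeq G (min t (uncoloured c)) c c'

/-- `AliceWins G k a b turn c`: Alice has a winning strategy in the `(a,b)`-colouring
game on `G` with `k` colours from position `c`, where `turn = true` means it is
Alice's turn and `turn = false` means it is Bob's turn. Alice wins exactly when the
whole graph eventually gets coloured. -/
inductive AliceWins (G : SimpleGraph V) (k a b : ℕ) :
    Bool → (V → Option (Fin k)) → Prop
  | done (turn : Bool) (c : V → Option (Fin k)) :
      uncoloured c = 0 → AliceWins G k a b turn c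
  | aliceTurn (c c' : V → Option (Fin k)) : 0 < uncoloured c → GTurn G a c c' →
      AliceWins G k a b false c' → AliceWins G k a b true c
  | bobTurn (c : V → Option (Fin k)) : 0 < uncoloured c →
      (∃ c', GTurn G b c c') →
      (∀ c', GTurn G b c c' → AliceWins G k a b true c') →
      AliceWins G k a b false c

/-- The everywhere-uncoloured position. -/
def emptyCol (V : Type*) (k : ℕ) : V → Option (Fin k) := fun _ => none

section Aux

open Finset

variable {k : ℕ} {G : SimpleGraph V}

lemma pos_of_none {c : V → Option (Fin k)} {u : V} (h : c u = none) : 0 < uncoloured c :=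
  Finset.card_pos.mpr ⟨u, by simp [h]⟩

lemma uncoloured_update {c : V → Option (Fin k)} {u : V} (h : c u = none) (x : Fin k) :
    uncoloured (Function.update c u (some x)) + 1 = uncoloured c := by
  classical
  unfold uncoloured
  have hset : (univ.filter fun v => Function.update c u (some x) v = none)
      = (univ.filter fun v => c v = none).erase u := by
    ext w
    by_cases hw : w = u <;> simp [hw, Function.update_apply, h]
  rw [hset, Finset.card_erase_of_mem (by simp [h])]
  have hpos : 0 < (univ.filter fun v => c v = none).card :=
    Finset.card_pos.mpr ⟨u, by simp [h]⟩
  omega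

lemma proper_update {c : V → Option (Fin k)} (hc : ProperPartial G c) {u : V} {x : Fin k}
    (hfree : ∀ w, G.Adj u w → c w ≠ some x) :
    ProperPartial G (Function.update c u (some x)) := by
  intro v w hadj y hv hw
  by_cases hvu : v = u <;> by_cases hwu : w = u
  · subst hvu; subst hwu; exact G.irrefl hadj
  · subst hvu
    rw [Function.update_self] at hv
    rw [Function.update_apply, if_neg hwu] at hw
    obtain rfl : x = y := Option.some_inj.mp hv
    exact hfree w hadj hw
  · subst hwu
    rw [Function.update_self] at hw
    rw [Function.update_apply, if_neg hvu] at hv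
    obtain rfl : x = y := Option.some_inj.mp hw
    exact hfree v hadj.symm hv
  · rw [Function.update_apply, if_neg hvu] at hv
    rw [Function.update_apply, if_neg hwu] at hw
    exact hc v w hadj y hv hw

end Aux

section Game

abbrev HG (n : ℕ) : SimpleGraph (Fin 2 × Fin n) :=
  (⊤ : SimpleGraph (Fin 2)).boxProd (⊤ : SimpleGraph (Fin n))

lemma hg_adj {n : ℕ} {a b : Fin 2} {v w : Fin n} :
    (HG n).Adj (a, v) (b, w) ↔ (a ≠ b ∧ v = w) ∨ (v ≠ w ∧ a = b) := by
  simp [HG, SimpleGraph.boxProd_adj]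

lemma fin2_ne_imp {a b : Fin 2} (h : a ≠ b) : b = a + 1 := by revert h; revert a b; decide

lemma fin2_add_one_ne (a : Fin 2) : a + 1 ≠ a := by revert a; decide

lemma fin2_add_one_add_one (a : Fin 2) : a + 1 + 1 = a := by revert a; decide

lemma fin2_eq_or (a b : Fin 2) : a = b ∨ a + 1 = b := by revert a b; decide

variable {n : ℕ} [NeZero n]

def eps : Fin 2 → Fin n := fun a => if a = 0 then 1 else -1

lemma eps_succ (a : Fin 2) : eps (n := n) (a + 1) = - eps a := by
  fin_cases a <;> simp [eps] <;> norm_num [eps]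

lemma eps_ne_zero (hn : 2 ≤ n) (a : Fin 2) : eps (n := n) a ≠ 0 := by
  have h1 : (1 : Fin n) ≠ 0 := by
    intro h
    have := congrArg Fin.val h
    rw [Fin.val_one', Fin.val_zero] at this
    have h2 : 1 % n = 1 := Nat.mod_eq_of_lt (by omega)
    omega
  fin_cases a <;> simp [eps] <;> simpa using h1

def PairInv (c : Fin 2 × Fin n → Option (Fin n)) : Prop :=
  ∀ (a : Fin 2) (v z : Fin n), c (a, v) = some z ↔ c (a + 1, v) = some (z + eps a)

lemma pairinv_none {c : Fin 2 × Fin n → Option (Fin n)} (hI : PairInv c) {a : Fin 2} {v : Fin n}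
    (h : c (a, v) = none) : c (a + 1, v) = none := by
  cases h' : c (a + 1, v) with
  | none => rfl
  | some z =>
      have h2 : c (a, v) = some (z - eps a) := by
        refine (hI a v (z - eps a)).mpr ?_
        rw [h', sub_add_cancel]
      rw [h] at h2; exact absurd h2 (by simp)

lemma exists_bob_move {c : Fin 2 × Fin n → Option (Fin n)}
    (hp : ProperPartial (HG n) c) (hI : PairInv c) (hpos : 0 < uncoloured c) :
    ∃ c', GMove (HG n) c c' := by
  obtain ⟨u, hu⟩ : ∃ u, c u = none := by
    obtain ⟨u, hu⟩ := Finset.card_pos.mp hpos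
    exact ⟨u, (Finset.mem_filter.mp hu).2⟩
  obtain ⟨a, v⟩ := u
  have hnone1 : c (a + 1, v) = none := pairinv_none hI hu
  obtain ⟨x, hx⟩ : ∃ x : Fin n, ∀ w, c (a, w) ≠ some x := by
    by_contra h
    push_neg at h
    choose g hg using h
    have hginj : Function.Injective g := by
      intro x x' e
      have h1 := hg x
      rw [e, hg x'] at h1
      exact (Option.some_inj.mp h1).symm
    obtain ⟨x, hxv⟩ := (Finite.injective_iff_surjective.mp hginj) v
    have := hg x
    rw [hxv, hu] at this
    exact absurd this (by simp)
  refine ⟨Function.update c (a, v) (some x), (a, v), x, hu, rfl, proper_update hp ?_⟩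
  rintro ⟨b, w2⟩ hadj heq
  rcases hg_adj.mp hadj with ⟨hab, rfl⟩ | ⟨hvw, rfl⟩
  · obtain rfl : b = a + 1 := fin2_ne_imp hab
    rw [hnone1] at heq; exact absurd heq (by simp)
  · exact hx w2 heq

lemma alice_strategy (hn : 2 ≤ n) :
    ∀ (m : ℕ) (c : Fin 2 × Fin n → Option (Fin n)), uncoloured c ≤ m →
      ProperPartial (HG n) c → PairInv c → AliceWins (HG n) n 1 1 false c := by
  intro m
  induction m with
  | zero =>
      intro c hle _ _
      exact AliceWins.done false c (by omega)
  | succ m ih =>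
      intro c hle hp hI
      by_cases h0 : uncoloured c = 0
      · exact AliceWins.done false c h0
      have hpos : 0 < uncoloured c := by omega
      obtain ⟨cb, hcb⟩ := exists_bob_move hp hI hpos
      refine AliceWins.bobTurn c hpos ⟨cb, by rw [GTurn, min_eq_left hpos]; exact ⟨cb, hcb, rfl⟩⟩ ?_
      intro c' ht
      have hmin : min 1 (uncoloured c) = 1 := min_eq_left hpos
      rw [GTurn, hmin] at ht
      obtain ⟨c₁, ⟨u, x, hu, hc₁, hp₁⟩, h0'⟩ := ht
      rw [show GMoveSeq (HG n) 0 c₁ c' = (c' = c₁) from rfl] at h0'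
      subst h0'
      subst hc₁
      obtain ⟨a, v⟩ := u
      set y : Fin n := x + eps a with hy
      set u' : Fin 2 × Fin n := (a + 1, v) with hu'
      have hne_u : u' ≠ (a, v) := fun h => fin2_add_one_ne a (congrArg Prod.fst h)
      have hc₁u : Function.update c (a, v) (some x) (a, v) = some x := Function.update_self _ _ _
      have hc₁u' : Function.update c (a, v) (some x) u' = none := by
        rw [Function.update_apply, if_neg hne_u]
        exact pairinv_none hI hu
      set c₁ : Fin 2 × Fin n → Option (Fin n) := Function.update c (a, v) (some x) with hc₁def
      have hfree : ∀ w, (HG n).Adj u' w → c₁ w ≠ some y := by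
        rintro ⟨b, w2⟩ hadj heq
        rcases hg_adj.mp hadj with ⟨hab, rfl⟩ | ⟨hvw, rfl⟩
        · obtain rfl : b = a + 1 + 1 := fin2_ne_imp hab
          rw [fin2_add_one_add_one] at heq
          rw [hc₁u] at heq
          have : x = y := Option.some_inj.mp heq
          rw [hy] at this
          exact eps_ne_zero hn a (by
            have := congrArg (· - x) this
            simpa using this.symm)
        · have hbw : ((a + 1 : Fin 2), w2) ≠ (a, v) := fun h => fin2_add_one_ne a (congrArg Prod.fst h)
          rw [hc₁def, Function.update_apply, if_neg hbw, hy] at heq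
          have hrow : c (a, w2) = some x := (hI a w2 x).mpr heq
          have hne2 : (a, w2) ≠ (a, v) := fun h => hvw (congrArg Prod.snd h).symm
          have hadj2 : (HG n).Adj (a, v) (a, w2) := hg_adj.mpr (Or.inr ⟨hvw, rfl⟩)
          exact hp₁ (a, v) (a, w2) hadj2 x hc₁u (by rw [hc₁def, Function.update_apply, if_neg hne2]; exact hrow)
      set c₂ : Fin 2 × Fin n → Option (Fin n) := Function.update c₁ u' (some y) with hc₂def
      have hp₂ : ProperPartial (HG n) c₂ := proper_update hp₁ hfree
      have hc₂a : c₂ (a, v) = some x := by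
        rw [hc₂def, Function.update_apply, if_neg (Ne.symm hne_u)]
        exact hc₁u
      have hc₂a1 : c₂ u' = some y := Function.update_self _ _ _
      have hI₂ : PairInv c₂ := by
        intro b v' z
        by_cases hv' : v' = v
        · subst hv'
          rcases fin2_eq_or a b with hba | hba <;> subst hba
          · rw [hc₂a, show ((a + 1 : Fin 2), v') = u' from rfl, hc₂a1, hy]
            constructor
            · rintro h; obtain rfl : x = z := Option.some_inj.mp h; rfl
            · intro h
              have := Option.some_inj.mp h
              exact congrArg some (add_right_cancel this)
          · rw [show ((a + 1 : Fin 2), v') = u' from rfl, hc₂a1,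
              show (a + 1 + 1 : Fin 2) = a from fin2_add_one_add_one a, hc₂a, eps_succ, hy]
            constructor
            · intro h
              obtain rfl : x + eps a = z := Option.some_inj.mp h
              congr 1
              abel
            · intro h
              have hh := Option.some_inj.mp h
              congr 1
              rw [hh]
              abel
        · have e1 : c₂ (b, v') = c (b, v') := by
            rw [hc₂def, Function.update_apply, if_neg (fun h => hv' (congrArg Prod.snd h)),
              hc₁def, Function.update_apply, if_neg (fun h => hv' (congrArg Prod.snd h))]
          have e2 : c₂ (b + 1, v') = c (b + 1, v') := by
            rw [hc₂def, Function.update_apply, if_neg (fun h => hv' (congrArg Prod.snd h)),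
              hc₁def, Function.update_apply, if_neg (fun h => hv' (congrArg Prod.snd h))]
          rw [e1, e2]
          exact hI b v' z
      have e1 : uncoloured c₁ + 1 = uncoloured c := uncoloured_update hu x
      have e2 : uncoloured c₂ + 1 = uncoloured c₁ := uncoloured_update hc₁u' y
      have hpos1 : 0 < uncoloured c₁ := pos_of_none hc₁u'
      refine AliceWins.aliceTurn c₁ c₂ hpos1 ?_ ?_
      · rw [GTurn, min_eq_left hpos1]
        exact ⟨c₂, ⟨u', y, hc₁u', hc₂def, hp₂⟩, rfl⟩
      · exact ih c₂ (by omega) hp₂ hI₂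

end Game

lemma no_win (n : ℕ) (hn : 2 ≤ n) :
    ∀ (turn : Bool) (c : Fin 2 × Fin n → Option (Fin (n - 1))),
      AliceWins (HG n) (n - 1) 1 1 turn c → ProperPartial (HG n) c → False := by
  intro turn c h
  induction h with
  | done turn c h0 =>
      intro hp
      have hsome : ∀ v, (c v).isSome := by
        intro v
        rw [uncoloured, Finset.card_eq_zero] at h0
        have := Finset.eq_empty_iff_forall_notMem.mp h0 v
        rw [Finset.mem_filter] at this
        cases hcv : c v with
        | none => exact absurd ⟨Finset.mem_univ v, hcv⟩ this
        | some z => rfl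
      set f : Fin n → Fin (n - 1) := fun i => (c (0, i)).get (hsome _) with hf
      have hfinj : Function.Injective f := by
        intro i j hij
        by_contra hne
        have hadj : (HG n).Adj (0, i) (0, j) := hg_adj.mpr (Or.inr ⟨hne, rfl⟩)
        have hi : c (0, i) = some (f i) := (Option.some_get (hsome (0, i))).symm
        have hj : c (0, j) = some (f i) := by rw [hij]; exact (Option.some_get (hsome (0, j))).symm
        exact hp (0, i) (0, j) hadj (f i) hi hj
      have := Fintype.card_le_of_injective f hfinj
      simp only [Fintype.card_fin] at this
      omega
  | aliceTurn c c' hpos ht _ ih =>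
      intro _
      rw [GTurn, min_eq_left hpos] at ht
      obtain ⟨c'', ⟨u, x, hu, hc, hp'⟩, h0'⟩ := ht
      rw [show GMoveSeq (HG n) 0 c'' c' = (c' = c'') from rfl] at h0'
      subst h0'
      exact ih hp'
  | bobTurn c hpos hex hall ih =>
      intro _
      obtain ⟨c', ht⟩ := hex
      have ht' := ht
      rw [GTurn, min_eq_left hpos] at ht'
      obtain ⟨c'', ⟨u, x, hu, hc, hp'⟩, h0'⟩ := ht'
      rw [show GMoveSeq (HG n) 0 c'' c' = (c' = c'') from rfl] at h0'
      subst h0'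
      exact ih c' ht hp'

/-- for every `n ≥ 2`, Alice has a winning strategy with `n` colours in
the colouring game on `H_{2,n} = K₂ □ K_n` with Bob moving first, and none with
`n − 1` colours (since `χ(K₂ □ K_n) = n`); hence `χ_{g_B}(H_{2,n}) = n`. -/
theorem stmt15 (n : ℕ) (hn : 2 ≤ n) :
    AliceWins ((⊤ : SimpleGraph (Fin 2)).boxProd (⊤ : SimpleGraph (Fin n))) n 1 1 false
      (emptyCol (Fin 2 × Fin n) n) ∧
    ¬ AliceWins ((⊤ : SimpleGraph (Fin 2)).boxProd (⊤ : SimpleGraph (Fin n))) (n - 1) 1 1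
      false (emptyCol (Fin 2 × Fin n) (n - 1)) := by
  haveI : NeZero n := ⟨by omega⟩
  constructor
  · refine alice_strategy hn (uncoloured (emptyCol (Fin 2 × Fin n) n)) _ le_rfl ?_ ?_
    · intro v w _ x hx; simp [emptyCol] at hx
    · intro a v z; simp [emptyCol]
  · intro h
    exact no_win n hn false _ h (by intro v w _ x hx; simp [emptyCol] at hx)
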